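/- arXiv:2208.01994 — 2 statements merged into one kernel-verified Lean document; each statement's English description precedes it below -/
import Mathlib

section
/- Suppose there is a sequence (a_k)_{k∈ℕ} of nonnegative real numbers with limsup_{k→∞} a_k = 1 such that, for all sufficiently large k and every 1 ≤ j ≤ N_k, one has ∫_X |s_{k,j}|² dμ ≤ a_k ∫_K |s_{k,j}|² dμ. Then limsup_{k→∞} k^{-n} N_k ≤ ∫_K f dμ. (This is the measure-theoretic content of the paper's Proposition 3.1 on L² weak Morse inequalities, applied to an orthonormal basis of the harmonic space.) -/
open MeasureTheory Filter Topology

/-- Measure-theoretic content of Proposition 3.1 (L² weak Morse inequalities):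
if an orthonormal family satisfies `‖s‖² ≤ a_k ∫_K |s|²` with `limsup a_k = 1`,
then `limsup k⁻ⁿ N_k ≤ ∫_K f`. -/
theorem stmt_0
    {X : Type*} [MeasurableSpace X] (μ : Measure X)
    (K : Set X) (hK : MeasurableSet K) (hKfin : μ K < ⊤)
    (n : ℕ)
    (N : ℕ → ℕ) (s : (k : ℕ) → Fin (N k) → X → ℂ)
    (hmeas : ∀ k (j : Fin (N k)), Measurable (s k j))
    (hnorm : ∀ k (j : Fin (N k)), ∫ x, ‖s k j x‖ ^ 2 ∂μ = 1)
    (B : ℕ → X → ℝ)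
    (hB : ∀ k x, B k x = ∑ j, ‖s k j x‖ ^ 2)
    (C : ℝ) (hC : 0 < C) (k₀ : ℕ)
    (hbound : ∀ k ≥ k₀, ∀ x ∈ K, ((k : ℝ) ^ n)⁻¹ * B k x ≤ C)
    (f : X → ℝ) (hf : IntegrableOn f K μ)
    (hlim : ∀ x ∈ K, limsup (fun k : ℕ => ((k : ℝ) ^ n)⁻¹ * B k x) atTop ≤ f x)
    (a : ℕ → ℝ) (ha0 : ∀ k, 0 ≤ a k)
    (halim : limsup a atTop = 1)
    (hest : ∀ᶠ k in atTop, ∀ j : Fin (N k),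
      ∫ x, ‖s k j x‖ ^ 2 ∂μ ≤ a k * ∫ x in K, ‖s k j x‖ ^ 2 ∂μ) :
    limsup (fun k : ℕ => ((k : ℝ) ^ n)⁻¹ * (N k : ℝ)) atTop ≤ ∫ x in K, f x ∂μ := by
  classical
  set r := ∫ x in K, f x ∂μ with hr
  -- measurability and nonnegativity of B
  have hBmeas : ∀ k, Measurable (B k) := by
    intro k
    have : B k = fun x => ∑ j, ‖s k j x‖ ^ 2 := funext (hB k)
    rw [this]
    exact Finset.measurable_sum _ fun j _ => ((hmeas k j).norm.pow_const 2)
  have hB0 : ∀ k x, 0 ≤ B k x := by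
    intro k x
    rw [hB]
    exact Finset.sum_nonneg fun j _ => by positivity
  set g : ℕ → X → ℝ := fun k x => ((k : ℝ) ^ n)⁻¹ * B k x with hgdef
  have hg0 : ∀ k x, 0 ≤ g k x := fun k x => mul_nonneg (by positivity) (hB0 k x)
  have hgmeas : ∀ k, Measurable (g k) := fun k => measurable_const.mul (hBmeas k)
  have hgC : ∀ k, k₀ ≤ k → ∀ x ∈ K, g k x ≤ C := fun k hk x hx => hbound k hk x hx
  set F : ℕ → X → ENNReal := fun k x => ENNReal.ofReal (min (g k x) C) with hFdef
  have hFmeas : ∀ k, Measurable (F k) := fun k =>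
    ((hgmeas k).min measurable_const).ennreal_ofReal
  have hFle : ∀ k, F k ≤ᵐ[μ.restrict K] fun _ => ENNReal.ofReal C :=
    fun k => Eventually.of_forall fun x => ENNReal.ofReal_le_ofReal (min_le_right _ _)
  have hfin : (∫⁻ _x, ENNReal.ofReal C ∂(μ.restrict K)) ≠ ⊤ := by
    rw [lintegral_const, Measure.restrict_apply_univ]
    exact ENNReal.mul_ne_top ENNReal.ofReal_ne_top hKfin.ne
  have fatou := limsup_lintegral_le (μ := μ.restrict K) (fun _ => ENNReal.ofReal C)
    hFmeas hFle hfin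
  have hf0 : ∀ x ∈ K, 0 ≤ f x := by
    intro x hx
    refine le_trans ?_ (hlim x hx)
    have hbdd : IsBoundedUnder (· ≤ ·) atTop (fun k : ℕ => ((k : ℝ) ^ n)⁻¹ * B k x) :=
      ⟨C, eventually_map.2 (eventually_atTop.2 ⟨k₀, fun k hk => hbound k hk x hx⟩)⟩
    exact le_limsup_of_frequently_le (Frequently.of_forall fun k => hg0 k x) hbdd
  have hr0 : 0 ≤ r := setIntegral_nonneg hK hf0
  -- pointwise limsup bound in ℝ≥0∞
  have hptwise : ∀ x ∈ K, limsup (fun k => F k x) atTop ≤ ENNReal.ofReal (f x) := by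
    intro x hx
    have hbdd : IsBoundedUnder (· ≤ ·) atTop (fun k => g k x) :=
      ⟨C, eventually_map.2 (eventually_atTop.2 ⟨k₀, fun k hk => hgC k hk x hx⟩)⟩
    have hcob : IsCoboundedUnder (· ≤ ·) atTop (fun k => g k x) :=
      isCoboundedUnder_le_of_le atTop (fun k => hg0 k x)
    have hmap : ENNReal.ofReal (limsup (fun k => g k x) atTop)
        = limsup (fun k => ENNReal.ofReal (g k x)) atTop :=
      Monotone.map_limsup_of_continuousAt (f := ENNReal.ofReal)
        (fun _ _ h => ENNReal.ofReal_le_ofReal h) _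
        ENNReal.continuous_ofReal.continuousAt hbdd hcob
    calc limsup (fun k => F k x) atTop
        ≤ limsup (fun k => ENNReal.ofReal (g k x)) atTop :=
          limsup_le_limsup (Eventually.of_forall fun k =>
            ENNReal.ofReal_le_ofReal (min_le_left _ _))
      _ = ENNReal.ofReal (limsup (fun k => g k x) atTop) := hmap.symm
      _ ≤ ENNReal.ofReal (f x) := ENNReal.ofReal_le_ofReal (hlim x hx)
  have key : limsup (fun k => ∫⁻ x in K, F k x ∂μ) atTop ≤ ENNReal.ofReal r := by
    refine fatou.trans ?_
    have h1 : (∫⁻ x in K, limsup (fun k => F k x) atTop ∂μ)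
        ≤ ∫⁻ x in K, ENNReal.ofReal (f x) ∂μ := by
      refine lintegral_mono_ae ?_
      rw [ae_restrict_iff' hK]
      exact Eventually.of_forall hptwise
    refine h1.trans ?_
    rw [ofReal_integral_eq_lintegral_ofReal hf
      ((ae_restrict_iff' hK).2 (Eventually.of_forall hf0))]
  -- integrability of |s|²
  have hsint : ∀ k (j : Fin (N k)), Integrable (fun x => ‖s k j x‖ ^ 2) μ := by
    intro k j
    by_contra h
    have := hnorm k j
    rw [integral_undef h] at this
    norm_num at this
  -- the main pointwise estimate
  have hNle : ∀ᶠ k : ℕ in atTop, ((k : ℝ) ^ n)⁻¹ * (N k : ℝ) ≤ a k * ∫ x in K, g k x ∂μ := by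
    filter_upwards [hest] with k hk
    have h1 : (N k : ℝ) ≤ a k * ∫ x in K, B k x ∂μ := by
      have hNk : (N k : ℝ) = ∑ j : Fin (N k), ∫ x, ‖s k j x‖ ^ 2 ∂μ := by
        simp only [hnorm, Finset.sum_const, Finset.card_univ, Fintype.card_fin,
          nsmul_eq_mul, mul_one]
      rw [hNk]
      calc ∑ j : Fin (N k), ∫ x, ‖s k j x‖ ^ 2 ∂μ
          ≤ ∑ j : Fin (N k), a k * ∫ x in K, ‖s k j x‖ ^ 2 ∂μ :=
            Finset.sum_le_sum fun j _ => hk j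
        _ = a k * ∑ j : Fin (N k), ∫ x in K, ‖s k j x‖ ^ 2 ∂μ := by rw [Finset.mul_sum]
        _ = a k * ∫ x in K, (∑ j : Fin (N k), ‖s k j x‖ ^ 2) ∂μ := by
            rw [integral_finset_sum _ fun j _ => (hsint k j).integrableOn]
        _ = a k * ∫ x in K, B k x ∂μ := by simp_rw [hB]
    have h2 : ∫ x in K, g k x ∂μ = ((k : ℝ) ^ n)⁻¹ * ∫ x in K, B k x ∂μ := by
      simp only [hgdef]
      exact integral_const_mul _ _
    calc ((k : ℝ) ^ n)⁻¹ * (N k : ℝ)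
        ≤ ((k : ℝ) ^ n)⁻¹ * (a k * ∫ x in K, B k x ∂μ) :=
          mul_le_mul_of_nonneg_left h1 (by positivity)
      _ = a k * ∫ x in K, g k x ∂μ := by rw [h2]; ring
  -- relating the real and ℝ≥0∞ integrals
  have hIJ : ∀ k, k₀ ≤ k → ∫ x in K, g k x ∂μ = (∫⁻ x in K, F k x ∂μ).toReal := by
    intro k hk
    have heq : ∫ x in K, g k x ∂μ = ∫ x in K, min (g k x) C ∂μ :=
      setIntegral_congr_fun hK fun x hx => (min_eq_left (hgC k hk x hx)).symm
    rw [heq, integral_eq_lintegral_of_nonneg_ae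
      (Eventually.of_forall fun x => le_min (hg0 k x) hC.le)
      ((hgmeas k).min measurable_const).aestronglyMeasurable]
  -- bounded below : coboundedness for the final limsup
  have hcob : IsCoboundedUnder (· ≤ ·) atTop (fun k : ℕ => ((k : ℝ) ^ n)⁻¹ * (N k : ℝ)) := by
    refine isCoboundedUnder_le_of_le atTop (x := 0) fun k => ?_
    positivity
  -- boundedness of a
  have habdd : IsBoundedUnder (· ≤ ·) atTop a := by
    by_contra h
    have hempty : {c : ℝ | ∀ᶠ k in atTop, a k ≤ c} = ∅ := by
      ext c
      simp only [Set.mem_setOf_eq, Set.mem_empty_iff_false, iff_false]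
      intro hc
      exact h ⟨c, eventually_map.2 hc⟩
    rw [limsup_eq, hempty, Real.sInf_empty] at halim
    norm_num at halim
  refine le_of_forall_pos_le_add ?_
  intro η hη
  set ε := min 1 (η / (2 * (r + 1))) with hεdef
  have hε0 : 0 < ε := lt_min one_pos (by positivity)
  have hε1 : ε ≤ 1 := min_le_left _ _
  have hεle : ε * (2 * (r + 1)) ≤ η := by
    have h := min_le_right 1 (η / (2 * (r + 1)))
    have h2 : (0:ℝ) < 2 * (r + 1) := by positivity
    calc ε * (2 * (r + 1)) ≤ (η / (2 * (r + 1))) * (2 * (r + 1)) :=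
          mul_le_mul_of_nonneg_right h h2.le
      _ = η := by field_simp
  have haev : ∀ᶠ k in atTop, a k < 1 + ε := by
    refine eventually_lt_of_limsup_lt ?_ habdd
    rw [halim]; linarith
  have hJev : ∀ᶠ k in atTop, (∫⁻ x in K, F k x ∂μ) < ENNReal.ofReal (r + η / 4) := by
    refine eventually_lt_of_limsup_lt (lt_of_le_of_lt key ?_)
    exact (ENNReal.ofReal_lt_ofReal_iff (by positivity)).2 (by linarith)
  have hev : ∀ᶠ k : ℕ in atTop, ((k : ℝ) ^ n)⁻¹ * (N k : ℝ) ≤ r + η := by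
    filter_upwards [hNle, haev, hJev, eventually_ge_atTop k₀] with k h1 h2 h3 h4
    have hI0 : 0 ≤ ∫ x in K, g k x ∂μ := setIntegral_nonneg hK fun x _ => hg0 k x
    have hIle : ∫ x in K, g k x ∂μ ≤ r + η / 4 := by
      rw [hIJ k h4]
      exact ENNReal.toReal_le_of_le_ofReal (by positivity) h3.le
    have step : a k * ∫ x in K, g k x ∂μ ≤ (1 + ε) * (r + η / 4) :=
      mul_le_mul h2.le hIle hI0 (by linarith)
    have final : (1 + ε) * (r + η / 4) ≤ r + η := by nlinarith [hε0.le, hr0, hη.le]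
    linarith [h1]
  exact limsup_le_of_le hcob hev
end

section
/- Suppose there exist constants C₀ > 0 and N₀ ∈ ℕ such that, for all sufficiently large k and every 1 ≤ j ≤ N_k, one has (1 − C₀/k − C₀ k^{-(N₀+1)}) ∫_X |s_{k,j}|² dμ ≤ ∫_K |s_{k,j}|² dμ. Then limsup_{k→∞} k^{-n} N_k ≤ ∫_K f dμ. (This is the measure-theoretic content of the paper's Proposition 4.2 on the asymptotics of the spectral function of low-energy forms: an orthonormal basis of the spectral space of the Kodaira Laplacian with eigenvalues ≤ k^{-N₀} satisfies ‖∂̄s‖² + ‖∂̄*s‖² ≤ k^{-N₀}‖s‖², which together with the optimal fundamental estimate yields exactly this hypothesis.) -/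
open MeasureTheory Filter Topology

/-- Measure-theoretic content of Proposition 4.2 (asymptotics of the spectral
function of low-energy forms): if
`(1 - C₀/k - C₀ k^{-(N₀+1)}) ∫_X |s|² ≤ ∫_K |s|²` for an orthonormal family,
then `limsup k⁻ⁿ N_k ≤ ∫_K f`. -/
theorem stmt_2
    {X : Type*} [MeasurableSpace X] (μ : Measure X)
    (K : Set X) (hK : MeasurableSet K) (hKfin : μ K < ⊤)
    (n : ℕ)
    (N : ℕ → ℕ) (s : (k : ℕ) → Fin (N k) → X → ℂ)
    (hmeas : ∀ k (j : Fin (N k)), Measurable (s k j))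
    (hnorm : ∀ k (j : Fin (N k)), ∫ x, ‖s k j x‖ ^ 2 ∂μ = 1)
    (B : ℕ → X → ℝ)
    (hB : ∀ k x, B k x = ∑ j, ‖s k j x‖ ^ 2)
    (C : ℝ) (hC : 0 < C) (k₀ : ℕ)
    (hbound : ∀ k ≥ k₀, ∀ x ∈ K, ((k : ℝ) ^ n)⁻¹ * B k x ≤ C)
    (f : X → ℝ) (hf : IntegrableOn f K μ)
    (hlim : ∀ x ∈ K, limsup (fun k : ℕ => ((k : ℝ) ^ n)⁻¹ * B k x) atTop ≤ f x)
    (C₀ : ℝ) (hC₀ : 0 < C₀) (N₀ : ℕ)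
    (hest : ∀ᶠ k in atTop, ∀ j : Fin (N k),
      (1 - C₀ / k - C₀ * ((k : ℝ) ^ (N₀ + 1))⁻¹) * ∫ x, ‖s k j x‖ ^ 2 ∂μ
        ≤ ∫ x in K, ‖s k j x‖ ^ 2 ∂μ) :
    limsup (fun k : ℕ => ((k : ℝ) ^ n)⁻¹ * (N k : ℝ)) atTop ≤ ∫ x in K, f x ∂μ := by
  classical
  -- integrability of the squares
  have hint : ∀ k (j : Fin (N k)), Integrable (fun x => ‖s k j x‖ ^ 2) μ := by
    intro k j
    by_contra h
    have h1 := hnorm k j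
    rw [integral_undef h] at h1
    norm_num at h1
  have hsqmeas : ∀ k (j : Fin (N k)), Measurable fun x => ‖s k j x‖ ^ 2 :=
    fun k j => ((hmeas k j).norm).pow_const 2
  have hBmeas : ∀ k, Measurable (B k) := by
    intro k
    have : B k = fun x => ∑ j, ‖s k j x‖ ^ 2 := funext (hB k)
    rw [this]
    exact Finset.measurable_sum _ fun j _ => hsqmeas k j
  have hBnonneg : ∀ k x, 0 ≤ B k x := by
    intro k x
    rw [hB]
    exact Finset.sum_nonneg fun j _ => by positivity
  have hBint : ∀ k, IntegrableOn (B k) K μ := by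
    intro k
    have : B k = fun x => ∑ j, ‖s k j x‖ ^ 2 := funext (hB k)
    rw [this]
    exact (integrable_finset_sum _ fun j _ => hint k j).integrableOn
  set g : ℕ → X → ℝ := fun k x => ((k : ℝ) ^ n)⁻¹ * B k x with hg
  have hgnonneg : ∀ k x, 0 ≤ g k x := fun k x => mul_nonneg (by positivity) (hBnonneg k x)
  have hgint : ∀ k, IntegrableOn (g k) K μ := fun k => (hBint k).const_mul _
  have hgmeas : ∀ k, Measurable (g k) := fun k => (hBmeas k).const_mul _
  -- f is nonnegative on K
  have hfK : ∀ x ∈ K, 0 ≤ f x := by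
    intro x hx
    refine le_trans ?_ (hlim x hx)
    refine le_limsup_of_frequently_le (Frequently.of_forall fun k => hgnonneg k x) ?_
    exact ⟨C, eventually_atTop.2 ⟨k₀, fun k hk => hbound k hk x hx⟩⟩
  have hIf : 0 ≤ ∫ x in K, f x ∂μ := setIntegral_nonneg hK hfK
  -- reverse Fatou, in ℝ≥0∞
  have hrev : limsup (fun k => ENNReal.ofReal (∫ x in K, g k x ∂μ)) atTop
      ≤ ENNReal.ofReal (∫ x in K, f x ∂μ) := by
    have hnn : ∀ k, 0 ≤ᵐ[μ.restrict K] g k := fun k => ae_of_all _ fun x => hgnonneg k x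
    calc limsup (fun k => ENNReal.ofReal (∫ x in K, g k x ∂μ)) atTop
        = limsup (fun k => ENNReal.ofReal (∫ x in K, g (k + k₀) x ∂μ)) atTop :=
          (limsup_nat_add _ k₀).symm
      _ = limsup (fun k => ∫⁻ x in K, ENNReal.ofReal (g (k + k₀) x) ∂μ) atTop := by
          congr 1
          funext k
          exact ofReal_integral_eq_lintegral_ofReal (hgint _) (hnn _)
      _ ≤ ∫⁻ x in K, limsup (fun k => ENNReal.ofReal (g (k + k₀) x)) atTop ∂μ := by
          refine limsup_lintegral_le (fun _ => ENNReal.ofReal C)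
            (fun k => (hgmeas _).ennreal_ofReal) (fun k => ?_) ?_
          · refine ae_restrict_of_forall_mem hK fun x hx => ?_
            exact ENNReal.ofReal_le_ofReal (hbound (k + k₀) (Nat.le_add_left _ _) x hx)
          · rw [lintegral_const]
            exact ENNReal.mul_ne_top ENNReal.ofReal_ne_top (by simp [hKfin.ne])
      _ ≤ ∫⁻ x in K, ENNReal.ofReal (f x) ∂μ := by
          refine lintegral_mono_ae (ae_restrict_of_forall_mem hK fun x hx => ?_)
          have hb : IsBoundedUnder (· ≤ ·) atTop fun k => g k x :=
            ⟨C, eventually_atTop.2 ⟨k₀, fun k hk => hbound k hk x hx⟩⟩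
          refine (limsup_le_iff ?_ ?_).2 fun y hy => ?_
          · isBoundedDefault
          · isBoundedDefault
          rcases eq_or_ne y ⊤ with rfl | hy'
          · exact Eventually.of_forall fun k => ENNReal.ofReal_lt_top
          · have hfxy : f x < y.toReal := by
              have := ENNReal.lt_iff_exists_real_btwn.1 hy
              rcases this with ⟨r, hr0, hr1, hr2⟩
              have : f x < r := by
                rwa [ENNReal.ofReal_lt_ofReal_iff_of_nonneg (hfK x hx)] at hr1
              exact this.trans_le (by
                rw [← ENNReal.toReal_ofReal hr0]
                exact ENNReal.toReal_mono hy' hr2.le)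
            have hev : ∀ᶠ k in atTop, g k x < y.toReal :=
              eventually_lt_of_limsup_lt ((hlim x hx).trans_lt hfxy) hb
            rw [eventually_atTop] at hev ⊢
            rcases hev with ⟨a, ha⟩
            refine ⟨a, fun k hk => ?_⟩
            have : g (k + k₀) x < y.toReal := ha _ (hk.trans (Nat.le_add_right _ _))
            calc ENNReal.ofReal (g (k + k₀) x) < ENNReal.ofReal y.toReal :=
                  ENNReal.ofReal_lt_ofReal_iff_of_nonneg (hgnonneg _ x) |>.2 this
              _ ≤ y := ENNReal.ofReal_toReal_le
      _ = ENNReal.ofReal (∫ x in K, f x ∂μ) :=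
          (ofReal_integral_eq_lintegral_ofReal hf
            (ae_restrict_of_forall_mem hK hfK)).symm
  -- hence the real set integrals are eventually below ∫ f + ε
  have key : ∀ ε : ℝ, 0 < ε → ∀ᶠ k in atTop, ∫ x in K, g k x ∂μ < ∫ x in K, f x ∂μ + ε := by
    intro ε hε
    have h1 : limsup (fun k => ENNReal.ofReal (∫ x in K, g k x ∂μ)) atTop
        < ENNReal.ofReal (∫ x in K, f x ∂μ + ε) :=
      hrev.trans_lt (by
        rw [ENNReal.ofReal_lt_ofReal_iff (by linarith)]
        linarith)
    filter_upwards [eventually_lt_of_limsup_lt h1] with k hk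
    exact (ENNReal.ofReal_lt_ofReal_iff_of_nonneg
      (setIntegral_nonneg hK fun x hx => hgnonneg k x)).1 hk
  -- the defect δ
  set δ : ℕ → ℝ := fun k => C₀ / k + C₀ * ((k : ℝ) ^ (N₀ + 1))⁻¹ with hδdef
  have hδ0 : ∀ k, 0 ≤ δ k := fun k => by positivity
  have hδtend : Tendsto δ atTop (𝓝 0) := by
    have h1 : Tendsto (fun k : ℕ => C₀ / k) atTop (𝓝 0) :=
      tendsto_const_div_atTop_nhds_zero_nat C₀
    have h2 : Tendsto (fun k : ℕ => C₀ * ((k : ℝ) ^ (N₀ + 1))⁻¹) atTop (𝓝 0) := by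
      have : Tendsto (fun k : ℕ => ((k : ℝ) ^ (N₀ + 1))) atTop atTop :=
        (tendsto_pow_atTop (Nat.succ_ne_zero N₀)).comp tendsto_natCast_atTop_atTop
      simpa using (this.inv_tendsto_atTop).const_mul C₀
    simpa using h1.add h2
  -- (1 - δ k) * (k⁻ⁿ N k) ≤ ∫_K g k, eventually
  have hNle : ∀ᶠ k in atTop, (1 - δ k) * (((k : ℝ) ^ n)⁻¹ * (N k : ℝ))
      ≤ ∫ x in K, g k x ∂μ := by
    filter_upwards [hest] with k hk
    have h1 : ∀ j : Fin (N k), (1 - δ k) ≤ ∫ x in K, ‖s k j x‖ ^ 2 ∂μ := by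
      intro j
      have := hk j
      rw [hnorm k j, mul_one] at this
      calc (1 - δ k) = 1 - C₀ / k - C₀ * ((k : ℝ) ^ (N₀ + 1))⁻¹ := by rw [hδdef]; ring
        _ ≤ _ := this
    have h2 : (1 - δ k) * (N k : ℝ) ≤ ∫ x in K, B k x ∂μ := by
      have hsum : ∫ x in K, B k x ∂μ = ∑ j, ∫ x in K, ‖s k j x‖ ^ 2 ∂μ := by
        have : B k = fun x => ∑ j, ‖s k j x‖ ^ 2 := funext (hB k)
        rw [this]
        exact integral_finset_sum _ fun j _ => (hint k j).integrableOn
      rw [hsum]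
      calc (1 - δ k) * (N k : ℝ) = ∑ _j : Fin (N k), (1 - δ k) := by
            simp [Finset.sum_const, mul_comm]; ring
        _ ≤ ∑ j, ∫ x in K, ‖s k j x‖ ^ 2 ∂μ := Finset.sum_le_sum fun j _ => h1 j
    have h3 : ∫ x in K, g k x ∂μ = ((k : ℝ) ^ n)⁻¹ * ∫ x in K, B k x ∂μ := by
      simp only [hg]
      exact integral_const_mul _ _
    rw [h3]
    calc (1 - δ k) * (((k : ℝ) ^ n)⁻¹ * (N k : ℝ))
        = ((k : ℝ) ^ n)⁻¹ * ((1 - δ k) * (N k : ℝ)) := by ring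
      _ ≤ ((k : ℝ) ^ n)⁻¹ * ∫ x in K, B k x ∂μ :=
          mul_le_mul_of_nonneg_left h2 (by positivity)
  -- conclude
  refine le_of_forall_pos_le_add fun ε hε => ?_
  set M : ℝ := ∫ x in K, f x ∂μ + ε / 2 with hM
  have hMpos : 0 < M := by rw [hM]; linarith
  refine limsup_le_of_le (isCoboundedUnder_le_of_le atTop fun k => by positivity) ?_
  have hδsmall : ∀ᶠ k in atTop, δ k < min (1 / 2) (ε / (4 * M)) :=
    hδtend.eventually_lt_const (lt_min (by norm_num) (by positivity))
  filter_upwards [key (ε / 2) (by linarith), hNle, hδsmall] with k hkey hkN hkδ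
  have hIk : 0 ≤ ∫ x in K, g k x ∂μ := setIntegral_nonneg hK fun x hx => hgnonneg k x
  have hIkM : ∫ x in K, g k x ∂μ ≤ M := by rw [hM]; exact hkey.le
  have hδ1 : δ k ≤ 1 / 2 := (lt_min_iff.1 hkδ).1.le
  have hδ2 : δ k ≤ ε / (4 * M) := (lt_min_iff.1 hkδ).2.le
  have ha : (0 : ℝ) ≤ ((k : ℝ) ^ n)⁻¹ * (N k : ℝ) := by positivity
  set a : ℝ := ((k : ℝ) ^ n)⁻¹ * (N k : ℝ) with hadef
  clear_value a
  clear_value δ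
  -- a * (1 - δ) ≤ I ≤ M, δ ≤ 1/2 ⇒ a ≤ 2M ; then a ≤ I + a δ ≤ M + 2M·ε/(4M) = M + ε/2
  have h5 : a * δ k ≤ a * (1 / 2) := mul_le_mul_of_nonneg_left hδ1 ha
  have hexp : (1 - δ k) * a = a - a * δ k := by ring
  rw [hexp] at hkN
  have ha2M : a ≤ 2 * M := by linarith
  have haux : a * (ε / (4 * M)) ≤ ε / 2 := by
    have heq : 2 * M * (ε / (4 * M)) = ε / 2 := by field_simp; ring
    calc a * (ε / (4 * M)) ≤ 2 * M * (ε / (4 * M)) :=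
          mul_le_mul_of_nonneg_right ha2M (by positivity)
      _ = ε / 2 := heq
  have : a ≤ ∫ x in K, g k x ∂μ + a * δ k := by nlinarith
  have h4 : a * δ k ≤ ε / 2 :=
    le_trans (mul_le_mul_of_nonneg_left hδ2 ha) haux
  calc a ≤ ∫ x in K, g k x ∂μ + a * δ k := this
    _ ≤ (∫ x in K, f x ∂μ + ε / 2) + ε / 2 := add_le_add hkey.le h4
    _ = ∫ x in K, f x ∂μ + ε := by ring
end
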